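/- Let V be a closed subspace of a Hilbert space H and S an isometry of H with SV ⊆ V, such that S|V is a pure shift, i.e. ⋂_{k∈ℕ} SᵏV = {0}. Then V decomposes as the orthogonal direct sum V = ⊕_{k≥0} Sᵏ(V ⊖ SV), where V ⊖ SV = V ∩ (SV)^⊥ (Wold–Kolmogorov decomposition). -/

import Mathlib

open scoped InnerProductSpace

theorem stmt_5 (H : Type*) [NormedAddCommGroup H] [InnerProductSpace ℂ H] [CompleteSpace H]
    (S : H →ₗᵢ[ℂ] H) (V : Submodule ℂ H) (hV : IsClosed (V : Set H))
    (hSV : Submodule.map S.toLinearMap V ≤ V)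
    (hpure : (⨅ k : ℕ, Submodule.map (S.toLinearMap ^ k) V) = ⊥) :
    (∀ j k : ℕ, j ≠ k →
      ∀ x ∈ Submodule.map (S.toLinearMap ^ j) (V ⊓ (Submodule.map S.toLinearMap V)ᗮ),
      ∀ y ∈ Submodule.map (S.toLinearMap ^ k) (V ⊓ (Submodule.map S.toLinearMap V)ᗮ),
        (inner ℂ x y : ℂ) = 0) ∧
    V = (⨆ k : ℕ, Submodule.map (S.toLinearMap ^ k)
          (V ⊓ (Submodule.map S.toLinearMap V)ᗮ)).topologicalClosure := by
  set T := S.toLinearMap with hT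
  -- inner products are preserved by powers of T
  have hinner : ∀ (n : ℕ) (x y : H), ⟪(T ^ n) x, (T ^ n) y⟫_ℂ = ⟪x, y⟫_ℂ := by
    intro n
    induction n with
    | zero => intro x y; simp
    | succ n ih =>
      intro x y
      have h1 : (T ^ (n + 1)) x = (T ^ n) (T x) := by rw [pow_succ]; rfl
      have h2 : (T ^ (n + 1)) y = (T ^ n) (T y) := by rw [pow_succ]; rfl
      rw [h1, h2, ih]
      exact S.inner_map_map x y
  -- images of V under powers stay inside V
  have hmap : ∀ n : ℕ, Submodule.map (T ^ n) V ≤ V := by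
    intro n
    induction n with
    | zero => rw [pow_zero, Module.End.one_eq_id, Submodule.map_id]
    | succ n ih =>
      have : Submodule.map (T ^ (n + 1)) V = Submodule.map (T ^ n) (Submodule.map T V) := by
        rw [pow_succ, Module.End.mul_eq_comp, Submodule.map_comp]
      rw [this]
      exact le_trans (Submodule.map_mono hSV) ih
  set W : Submodule ℂ H := V ⊓ (Submodule.map T V)ᗮ with hW
  -- orthogonality for j < k
  have aux : ∀ j k : ℕ, j < k → ∀ x ∈ Submodule.map (T ^ j) W,
      ∀ y ∈ Submodule.map (T ^ k) W, ⟪x, y⟫_ℂ = 0 := by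
    intro j k hjk x hx y hy
    obtain ⟨u, hu, rfl⟩ := hx
    obtain ⟨w, hw, rfl⟩ := hy
    obtain ⟨m, rfl⟩ : ∃ m, k = j + (m + 1) := ⟨k - j - 1, by omega⟩
    have h1 : (T ^ (j + (m + 1))) w = (T ^ j) ((T ^ (m + 1)) w) := by
      rw [pow_add]; rfl
    rw [h1, hinner]
    have h2 : (T ^ (m + 1)) w ∈ Submodule.map T V := by
      have : (T ^ (m + 1)) w = T ((T ^ m) w) := by rw [pow_succ']; rfl
      rw [this]
      exact Submodule.mem_map_of_mem (hmap m (Submodule.mem_map_of_mem hw.1))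
    exact Submodule.inner_left_of_mem_orthogonal h2 hu.2
  -- closedness of S V
  have hTVclosed : IsClosed ((Submodule.map T V : Submodule ℂ H) : Set H) := by
    have h := S.isometry.isClosedEmbedding.isClosedMap _ hV
    rw [Submodule.map_coe]; exact h
  haveI : CompleteSpace (Submodule.map T V) := hTVclosed.completeSpace_coe
  set K : Submodule ℂ H :=
    (⨆ k : ℕ, Submodule.map (T ^ k) W).topologicalClosure with hKdef
  haveI : CompleteSpace K := (Submodule.isClosed_topologicalClosure _).completeSpace_coe
  have hKV : K ≤ V :=
    Submodule.topologicalClosure_minimal _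
      (iSup_le fun k => le_trans (Submodule.map_mono inf_le_left) (hmap k)) hV
  have hsubK : ∀ k : ℕ, Submodule.map (T ^ k) W ≤ K :=
    fun k => le_trans (le_iSup (fun k => Submodule.map (T ^ k) W) k) (Submodule.le_topologicalClosure _)
  -- key: V ∩ Kᗮ = 0
  have key : ∀ v, v ∈ V → v ∈ Kᗮ → v = 0 := by
    intro v hvV hvK
    have hmem : ∀ k : ℕ, v ∈ Submodule.map (T ^ k) V := by
      intro k
      induction k with
      | zero => simpa [Submodule.map_id] using hvV
      | succ k ih =>
        obtain ⟨u, huV, hvu⟩ := ih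
        obtain ⟨y, hy, z, hz, hu⟩ :=
          (Submodule.map T V).exists_add_mem_mem_orthogonal u
        have hzV : z ∈ V := by
          have : z = u - y := by rw [hu]; abel
          rw [this]; exact sub_mem huV (hSV hy)
        have hzW : z ∈ W := ⟨hzV, hz⟩
        have hTzK : (T ^ k) z ∈ K := hsubK k (Submodule.mem_map_of_mem hzW)
        have h0 : ⟪(T ^ k) z, v⟫_ℂ = 0 :=
          Submodule.inner_right_of_mem_orthogonal hTzK hvK
        have hsplit : v = (T ^ k) y + (T ^ k) z := by
          rw [← hvu, hu, map_add]
        have hzy : ⟪(T ^ k) z, (T ^ k) y⟫_ℂ = 0 := by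
          rw [hinner]
          exact Submodule.inner_left_of_mem_orthogonal hy hz
        have hzz : ⟪z, z⟫_ℂ = 0 := by
          have : ⟪(T ^ k) z, (T ^ k) z⟫_ℂ = 0 := by
            have := h0
            rw [hsplit, inner_add_right, hzy, zero_add] at this
            exact this
          rwa [hinner] at this
        have hz0 : z = 0 := inner_self_eq_zero.mp hzz
        have huy : u = y := by rw [hu, hz0, add_zero]
        obtain ⟨u', hu'V, hu'⟩ := hy
        refine ⟨u', hu'V, ?_⟩
        have : (T ^ (k + 1)) u' = (T ^ k) (T u') := by rw [pow_succ]; rfl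
        rw [this, hu', ← huy, hvu]
    have : v ∈ (⨅ k : ℕ, Submodule.map (T ^ k) V) := Submodule.mem_iInf _ |>.mpr hmem
    rw [hpure] at this
    exact this
  constructor
  · intro j k hjk x hx y hy
    rcases hjk.lt_or_gt with h | h
    · exact aux j k h x hx y hy
    · exact inner_eq_zero_symm.mpr (aux k j h y hy x hx)
  · refine le_antisymm ?_ hKV
    intro v hvV
    obtain ⟨y, hy, z, hz, hv⟩ := K.exists_add_mem_mem_orthogonal v
    have hzV : z ∈ V := by
      have : z = v - y := by rw [hv]; abel
      rw [this]; exact sub_mem hvV (hKV hy)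
    have hz0 : z = 0 := key z hzV hz
    rw [hv, hz0, add_zero]
    exact hy
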